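/- Let ζ ∈ (0,1) and let (α_k)_{k∈ℕ} be positive reals with α_k = Θ((k+1)^{−1}). Define s_0 := 0 and s_{t+1} := the least k > s_t such that Σ_{i=s_t}^{k} α_i > α_{s_t}^{ζ}. Then Σ_{k=s_t}^{s_{t+1}−1} α_k² = O((t+1)^{−1−1/ζ}); that is, there exists C > 0 such that for all sufficiently large t, Σ_{k=s_t}^{s_{t+1}−1} α_k² ≤ C(t+1)^{−1−1/ζ}. -/

import Mathlib

open Filter

/-- For step sizes `α_k = Θ(1/(k+1))` and the window indices `s_t`,
the windowed sum of squared step sizes satisfies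
`Σ_{k=s_t}^{s_{t+1}-1} α_k² = O((t+1)^{-1-1/ζ})`. -/
theorem windowed_squared_stepsize_bound (ζ : ℝ) (hζ : ζ ∈ Set.Ioo (0 : ℝ) 1)
    (α : ℕ → ℝ) (hαpos : ∀ k, 0 < α k)
    (hΘ : ∃ c₁ c₂ : ℝ, ∃ N : ℕ, 0 < c₁ ∧ c₁ ≤ c₂ ∧ ∀ k ≥ N,
      c₁ / ((k : ℝ) + 1) ≤ α k ∧ α k ≤ c₂ / ((k : ℝ) + 1))
    (s : ℕ → ℕ) (hs0 : s 0 = 0)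
    (hs : ∀ t, IsLeast
      {k : ℕ | s t < k ∧ (α (s t)) ^ ζ < ∑ i ∈ Finset.Icc (s t) k, α i} (s (t + 1))) :
    ∃ C > (0 : ℝ), ∃ T : ℕ, ∀ t ≥ T,
      ∑ k ∈ Finset.Ico (s t) (s (t + 1)), (α k) ^ 2 ≤
        C * ((t : ℝ) + 1) ^ (-(1 + 1 / ζ)) := by
  obtain ⟨hζ0, hζ1⟩ := hζ
  obtain ⟨c₁, c₂, N, hc₁, hc₁₂, hΘ⟩ := hΘ
  have hc₂ : (0:ℝ) < c₂ := lt_of_lt_of_le hc₁ hc₁₂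
  have hmono : ∀ t, s t < s (t + 1) := fun t => ((hs t).1).1
  have hst : ∀ t, t ≤ s t := by
    intro t
    induction t with
    | zero => exact Nat.zero_le _
    | succ n ih => exact Nat.succ_le_of_lt (lt_of_le_of_lt ih (hmono n))
  have hupos : ∀ t, (0:ℝ) < (s t : ℝ) + 1 := fun t => by positivity
  have hut : ∀ t : ℕ, ((t:ℝ) + 1) ≤ (s t : ℝ) + 1 := by
    intro t
    have : (t:ℝ) ≤ (s t : ℝ) := by exact_mod_cast hst t
    linarith
  set c₃ : ℝ := c₁ ^ ζ / c₂ with hc₃def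
  have hc₃ : 0 < c₃ := div_pos (Real.rpow_pos_of_pos hc₁ ζ) hc₂
  -- the basic recursion coming from the definition of `s (t+1)`
  have hrec : ∀ t, N ≤ t →
      c₃ * ((s t : ℝ) + 1) ^ (1 - ζ) < ((s (t+1) : ℝ) + 1) - ((s t : ℝ) + 1) + 1 := by
    intro t ht
    have hsN : N ≤ s t := le_trans ht (hst t)
    have hkey := ((hs t).1).2
    have hub : ∑ i ∈ Finset.Icc (s t) (s (t+1)), α i ≤
        ((s (t+1) : ℝ) - (s t : ℝ) + 1) * (c₂ / ((s t : ℝ) + 1)) := by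
      have hb : ∀ i ∈ Finset.Icc (s t) (s (t+1)), α i ≤ c₂ / ((s t : ℝ) + 1) := by
        intro i hi
        obtain ⟨h1, h2⟩ := Finset.mem_Icc.mp hi
        refine le_trans (hΘ i (le_trans hsN h1)).2 ?_
        have : ((s t : ℝ)) ≤ (i : ℝ) := by exact_mod_cast h1
        gcongr
      calc ∑ i ∈ Finset.Icc (s t) (s (t+1)), α i
          ≤ (Finset.Icc (s t) (s (t+1))).card • (c₂ / ((s t : ℝ) + 1)) :=
            Finset.sum_le_card_nsmul _ _ _ hb
        _ = ((s (t+1) : ℝ) - (s t : ℝ) + 1) * (c₂ / ((s t : ℝ) + 1)) := by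
            rw [Nat.card_Icc, nsmul_eq_mul]
            congr 1
            have h2 : s t ≤ s (t+1) + 1 := by have := hmono t; omega
            push_cast [Nat.cast_sub h2]
            ring
    have hlb : (c₁ / ((s t : ℝ) + 1)) ^ ζ ≤ α (s t) ^ ζ :=
      Real.rpow_le_rpow (by positivity) (hΘ (s t) hsN).1 hζ0.le
    have hcomb : (c₁ / ((s t : ℝ) + 1)) ^ ζ <
        ((s (t+1) : ℝ) - (s t : ℝ) + 1) * (c₂ / ((s t : ℝ) + 1)) :=
      lt_of_le_of_lt hlb (lt_of_lt_of_le hkey hub)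
    set u : ℝ := (s t : ℝ) + 1 with hudef
    set Δ : ℝ := ((s (t+1) : ℝ) - (s t : ℝ) + 1) with hΔdef
    have hu : 0 < u := hupos t
    have hP : (0:ℝ) < u ^ ζ := Real.rpow_pos_of_pos hu ζ
    have e1 : (c₁ / u) ^ ζ = c₁ ^ ζ / u ^ ζ := Real.div_rpow hc₁.le hu.le ζ
    have e2 : u ^ (1 - ζ) = u / u ^ ζ := by
      rw [Real.rpow_sub hu, Real.rpow_one]
    have hΔeq : ((s (t+1) : ℝ) + 1) - ((s t : ℝ) + 1) + 1 = Δ := by rw [hΔdef]; ring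
    rw [hΔeq, e2]
    rw [e1] at hcomb
    have h3 : c₁ ^ ζ * u < Δ * c₂ * u ^ ζ := by
      have hc' : c₁ ^ ζ / u ^ ζ < Δ * c₂ / u := by
        rw [mul_div_assoc]
        exact hcomb
      rw [div_lt_div_iff₀ hP hu] at hc'
      linarith
    rw [hc₃def, div_mul_div_comm, div_lt_iff₀ (by positivity)]
    calc c₁ ^ ζ * u < Δ * c₂ * u ^ ζ := h3
      _ = Δ * (c₂ * u ^ ζ) := by ring
  -- eventual thresholds
  have haux : Tendsto (fun t : ℕ => ((t:ℝ) + 1)) atTop atTop :=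
    tendsto_atTop_add_const_right atTop 1 tendsto_natCast_atTop_atTop
  have htend1 : Tendsto (fun t : ℕ => ((t:ℝ) + 1) ^ (1 - ζ)) atTop atTop :=
    (tendsto_rpow_atTop (by linarith)).comp haux
  have htend2 : Tendsto (fun t : ℕ => ((t:ℝ) + 1) ^ ζ) atTop atTop :=
    (tendsto_rpow_atTop hζ0).comp haux
  obtain ⟨T₀, hT₀⟩ := Filter.eventually_atTop.mp
    (((htend1.eventually_ge_atTop (2/c₃)).and
      ((htend2.eventually_ge_atTop (c₃/2)).and
        ((haux.eventually_ge_atTop c₂).and (Filter.eventually_ge_atTop N)))))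
  set c₄ : ℝ := c₃ / 2 with hc₄def
  have hc₄ : 0 < c₄ := by positivity
  set c₅ : ℝ := ζ * c₄ * (2:ℝ) ^ (ζ - 1) with hc₅def
  have hc₅ : 0 < c₅ := by
    have : (0:ℝ) < (2:ℝ) ^ (ζ - 1) := Real.rpow_pos_of_pos (by norm_num) _
    positivity
  -- step: the ζ-th power of `s t + 1` increases by at least `c₅` each window
  have hstep : ∀ t, T₀ ≤ t →
      ((s t : ℝ) + 1) ^ ζ + c₅ ≤ ((s (t+1) : ℝ) + 1) ^ ζ := by
    intro t ht
    obtain ⟨h2c₃, hc₄le, hc₂le, hN⟩ := hT₀ t ht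
    set u : ℝ := (s t : ℝ) + 1 with hudef
    set u' : ℝ := (s (t+1) : ℝ) + 1 with hudef'
    have hu : 0 < u := hupos t
    have hu' : 0 < u' := hupos (t+1)
    have h1ζ : (0:ℝ) ≤ 1 - ζ := by linarith
    have hmon1 : ((t:ℝ) + 1) ^ (1 - ζ) ≤ u ^ (1 - ζ) :=
      Real.rpow_le_rpow (by positivity) (hut t) h1ζ
    have hmonζ : ((t:ℝ) + 1) ^ ζ ≤ u ^ ζ :=
      Real.rpow_le_rpow (by positivity) (hut t) hζ0.le
    have h2 : 2 ≤ c₃ * u ^ (1 - ζ) := by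
      have h := le_trans h2c₃ hmon1
      rw [div_le_iff₀ hc₃] at h
      linarith
    have hrect := hrec t hN
    set d : ℝ := c₄ * u ^ (1 - ζ) with hddef
    have hdpos : 0 < d := by positivity
    have hd1 : (1:ℝ) ≤ d := by rw [hddef, hc₄def]; linarith
    have hu'ge : u + d ≤ u' := by
      have : c₃ * u ^ (1 - ζ) = 2 * d := by rw [hddef, hc₄def]; ring
      rw [this] at hrect
      linarith
    have hdu : d ≤ u := by
      have h3 : c₄ ≤ u ^ ζ := le_trans hc₄le hmonζ
      have h4 : d ≤ u ^ ζ * u ^ (1 - ζ) := by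
        rw [hddef]
        exact mul_le_mul_of_nonneg_right h3 (Real.rpow_nonneg hu.le _)
      have h5 : u ^ ζ * u ^ (1 - ζ) = u := by
        rw [← Real.rpow_add hu]
        norm_num
      linarith [h4, h5.le]
    set w : ℝ := u + d with hwdef
    have hw : 0 < w := by positivity
    have hfrac : -1 ≤ u / w - 1 := by
      have : 0 ≤ u / w := by positivity
      linarith
    have hb : (u / w) ^ ζ ≤ 1 + ζ * (u / w - 1) := by
      have h := rpow_one_add_le_one_add_mul_self hfrac hζ0.le hζ1.le
      have e : (1:ℝ) + (u / w - 1) = u / w := by ring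
      rwa [e] at h
    have huζ : u ^ ζ ≤ w ^ ζ * (1 + ζ * (u / w - 1)) := by
      have e : u = w * (u / w) := by field_simp
      calc u ^ ζ = (w * (u / w)) ^ ζ := by rw [← e]
        _ = w ^ ζ * (u / w) ^ ζ := Real.mul_rpow hw.le (by positivity)
        _ ≤ w ^ ζ * (1 + ζ * (u / w - 1)) :=
            mul_le_mul_of_nonneg_left hb (Real.rpow_nonneg hw.le _)
    have e2 : w ^ ζ * (1 + ζ * (u / w - 1)) = w ^ ζ - ζ * d * (w ^ ζ / w) := by
      have e3 : u / w - 1 = -(d / w) := by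
        field_simp
        linarith [hwdef]
      rw [e3]
      field_simp
      ring
    have e4 : w ^ ζ / w = w ^ (ζ - 1) := by
      rw [Real.rpow_sub hw, Real.rpow_one]
    have hw2u : w ≤ 2 * u := by linarith
    have h4 : (2 * u) ^ (ζ - 1) ≤ w ^ (ζ - 1) :=
      Real.rpow_le_rpow_of_nonpos hw hw2u (by linarith)
    have h5 : d * (2 * u) ^ (ζ - 1) = c₄ * (2:ℝ) ^ (ζ - 1) := by
      rw [Real.mul_rpow (by norm_num) hu.le, hddef]
      have h6 : u ^ (1 - ζ) * u ^ (ζ - 1) = 1 := by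
        rw [← Real.rpow_add hu]
        norm_num
      calc c₄ * u ^ (1 - ζ) * ((2:ℝ) ^ (ζ - 1) * u ^ (ζ - 1))
          = c₄ * (2:ℝ) ^ (ζ - 1) * (u ^ (1 - ζ) * u ^ (ζ - 1)) := by ring
        _ = c₄ * (2:ℝ) ^ (ζ - 1) := by rw [h6, mul_one]
    have h7 : c₅ ≤ ζ * d * (w ^ ζ / w) := by
      rw [e4, hc₅def]
      calc ζ * c₄ * (2:ℝ) ^ (ζ - 1) = ζ * (d * (2 * u) ^ (ζ - 1)) := by rw [h5]; ring
        _ ≤ ζ * (d * w ^ (ζ - 1)) := by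
            apply mul_le_mul_of_nonneg_left _ hζ0.le
            exact mul_le_mul_of_nonneg_left h4 hdpos.le
        _ = ζ * d * w ^ (ζ - 1) := by ring
    have h8 : u ^ ζ + c₅ ≤ w ^ ζ := by
      rw [e2] at huζ
      linarith
    have h9 : w ^ ζ ≤ u' ^ ζ := Real.rpow_le_rpow hw.le hu'ge hζ0.le
    linarith
  -- linear growth of the ζ-th power
  have hind : ∀ n : ℕ, c₅ * n ≤ ((s (T₀ + n) : ℝ) + 1) ^ ζ := by
    intro n
    induction n with
    | zero => simpa using Real.rpow_nonneg (hupos (T₀ + 0)).le ζ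
    | succ n ih =>
      have h := hstep (T₀ + n) (Nat.le_add_right _ _)
      have e : T₀ + (n + 1) = (T₀ + n) + 1 := by ring
      rw [e]
      push_cast
      push_cast at ih
      linarith
  set c₆ : ℝ := (c₅ / 2) ^ (1 / ζ) with hc₆def
  have hc₆ : 0 < c₆ := Real.rpow_pos_of_pos (by positivity) _
  have hlow : ∀ t, 2 * T₀ + 2 ≤ t → c₆ * ((t:ℝ) + 1) ^ (1 / ζ) ≤ (s t : ℝ) + 1 := by
    intro t ht
    have hT₀t : T₀ ≤ t := by omega
    have h1 := hind (t - T₀)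
    rw [Nat.add_sub_cancel' hT₀t] at h1
    have hc : ((t - T₀ : ℕ) : ℝ) = (t:ℝ) - (T₀:ℝ) := by
      push_cast [Nat.cast_sub hT₀t]
      ring
    rw [hc] at h1
    have ht' : (2 * (T₀:ℝ) + 2) ≤ (t:ℝ) := by exact_mod_cast ht
    have h2 : c₅ / 2 * ((t:ℝ) + 1) ≤ ((s t : ℝ) + 1) ^ ζ := by nlinarith
    have h3 : (c₅ / 2 * ((t:ℝ) + 1)) ^ (1/ζ) ≤ (((s t : ℝ) + 1) ^ ζ) ^ (1/ζ) :=
      Real.rpow_le_rpow (by positivity) h2 (by positivity)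
    have e : (((s t : ℝ) + 1) ^ ζ) ^ (1/ζ) = (s t : ℝ) + 1 := by
      rw [← Real.rpow_mul (hupos t).le, mul_one_div, div_self (ne_of_gt hζ0), Real.rpow_one]
    have e2 : (c₅ / 2 * ((t:ℝ) + 1)) ^ (1/ζ) = c₆ * ((t:ℝ) + 1) ^ (1/ζ) := by
      rw [Real.mul_rpow (by positivity) (by positivity), hc₆def]
    rw [e, e2] at h3
    exact h3
  -- final assembly
  refine ⟨(c₂ / c₆) ^ (1 + ζ), Real.rpow_pos_of_pos (by positivity) _,
    max (2 * T₀ + 2) (max N ⌈c₂⌉₊), ?_⟩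
  intro t ht
  have ht1 : 2 * T₀ + 2 ≤ t := le_trans (le_max_left _ _) ht
  have htN : N ≤ t := le_trans (le_trans (le_max_left _ _) (le_max_right _ _)) ht
  have htc₂ : ⌈c₂⌉₊ ≤ t := le_trans (le_trans (le_max_right _ _) (le_max_right _ _)) ht
  have hsN : N ≤ s t := le_trans htN (hst t)
  set u : ℝ := (s t : ℝ) + 1 with hudef
  have hu : 0 < u := hupos t
  have hc₂u : c₂ ≤ u := by
    have h1 : c₂ ≤ (⌈c₂⌉₊ : ℝ) := Nat.le_ceil c₂
    have h2 : ((⌈c₂⌉₊ : ℕ) : ℝ) ≤ (t:ℝ) := by exact_mod_cast htc₂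
    linarith [hut t]
  have hα_up : ∀ k ∈ Finset.Ico (s t) (s (t+1)), α k ≤ c₂ / u := by
    intro k hk
    obtain ⟨h1, _⟩ := Finset.mem_Ico.mp hk
    refine le_trans (hΘ k (le_trans hsN h1)).2 ?_
    have : ((s t : ℝ)) ≤ (k : ℝ) := by exact_mod_cast h1
    gcongr
    rw [hudef]; linarith
  have h1 : ∑ k ∈ Finset.Ico (s t) (s (t+1)), (α k) ^ 2 ≤
      (c₂ / u) * ∑ k ∈ Finset.Ico (s t) (s (t+1)), α k := by
    rw [Finset.mul_sum]
    apply Finset.sum_le_sum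
    intro k hk
    rw [sq]
    exact mul_le_mul_of_nonneg_right (hα_up k hk) (hαpos k).le
  have hα1 : α (s t) ≤ 1 := by
    refine le_trans (hΘ (s t) hsN).2 ?_
    rw [div_le_one hu]
    exact hc₂u
  have h2 : ∑ k ∈ Finset.Ico (s t) (s (t+1)), α k ≤ α (s t) ^ ζ := by
    rcases eq_or_lt_of_le (Nat.succ_le_of_lt (hmono t)) with heq | hlt
    · rw [← heq, Nat.Ico_succ_singleton, Finset.sum_singleton]
      calc α (s t) = α (s t) ^ (1:ℝ) := (Real.rpow_one _).symm
        _ ≤ α (s t) ^ ζ := Real.rpow_le_rpow_of_exponent_ge (hαpos _) hα1 hζ1.le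
    · have hk : s t < s (t+1) - 1 := by omega
      have hnot : ¬ (α (s t) ^ ζ < ∑ i ∈ Finset.Icc (s t) (s (t+1) - 1), α i) := by
        intro hcon
        have := (hs t).2 ⟨hk, hcon⟩
        omega
      have e : Finset.Ico (s t) (s (t+1)) = Finset.Icc (s t) (s (t+1) - 1) := by
        rw [← Finset.Ico_add_one_right_eq_Icc]
        congr 1
        omega
      rw [e]
      exact le_of_not_gt hnot
  have hlowt := hlow t ht1
  have hpos2 : (0:ℝ) < c₂ / u := by positivity
  have hζne : ζ ≠ 0 := ne_of_gt hζ0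
  calc ∑ k ∈ Finset.Ico (s t) (s (t+1)), (α k) ^ 2
      ≤ (c₂ / u) * (α (s t) ^ ζ) := le_trans h1 (mul_le_mul_of_nonneg_left h2 hpos2.le)
    _ ≤ (c₂ / u) * ((c₂ / u) ^ ζ) := mul_le_mul_of_nonneg_left
        (Real.rpow_le_rpow (hαpos _).le (hΘ (s t) hsN).2 hζ0.le) hpos2.le
    _ = (c₂ / u) ^ (1 + ζ) := by rw [Real.rpow_add hpos2, Real.rpow_one]
    _ ≤ (c₂ / (c₆ * ((t:ℝ) + 1) ^ (1/ζ))) ^ (1 + ζ) := by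
        have hXpos : (0:ℝ) < c₆ * ((t:ℝ) + 1) ^ (1/ζ) := by positivity
        refine Real.rpow_le_rpow (by positivity) ?_ (by linarith)
        gcongr
    _ = (c₂ / c₆) ^ (1 + ζ) * ((t:ℝ) + 1) ^ (-(1 + 1/ζ)) := by
        have hXneg : ((t:ℝ) + 1) ^ (-(1/ζ)) = (((t:ℝ) + 1) ^ (1/ζ))⁻¹ :=
          Real.rpow_neg (by positivity) _
        have hXpos : (0:ℝ) < ((t:ℝ) + 1) ^ (1/ζ) := Real.rpow_pos_of_pos (by positivity) _
        have e1 : c₂ / (c₆ * ((t:ℝ) + 1) ^ (1/ζ)) = (c₂ / c₆) * ((t:ℝ) + 1) ^ (-(1/ζ)) := by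
          rw [hXneg]
          field_simp
        have e2 : (-(1/ζ)) * (1 + ζ) = -(1 + 1/ζ) := by
          field_simp
          ring
        rw [e1, Real.mul_rpow (by positivity) (by positivity),
          ← Real.rpow_mul (by positivity : (0:ℝ) ≤ (t:ℝ) + 1), e2]
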